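/- If U and V are independent standard normal random variables and λ_L ≥ λ_S > 0, then P(λ_S·|V| ≤ λ_L·|U|) = (2/π)·arctan(λ_L/λ_S) ≥ 1/2. -/

import Mathlib

open MeasureTheory ProbabilityTheory Real

noncomputable def Egauss (x : ℝ) : ℝ := Real.exp (-x^2/2)

lemma aux_ioi {b : ℝ} (hb : 0 < b) :
    ∫ r in Set.Ioi (0:ℝ), r * Real.exp (-b * r ^ 2) = (2 * b)⁻¹ := by
  have A : ∀ x : ℝ, HasDerivAt (fun x => -(2 * b)⁻¹ * Real.exp (-b * x ^ 2))
      (x * Real.exp (-b * x ^ 2)) x := by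
    intro x
    convert ((hasDerivAt_pow 2 x).const_mul (-b)).exp.const_mul (-(2 * b)⁻¹) using 1
    · rfl
    · rfl
    field_simp
    ring
  have B : Filter.Tendsto (fun y : ℝ ↦ -(2 * b)⁻¹ * Real.exp (-b * y ^ 2))
      Filter.atTop (nhds (-(2 * b)⁻¹ * 0)) := by
    refine Filter.Tendsto.const_mul _ ?_
    exact Real.tendsto_exp_atBot.comp
      ((Filter.tendsto_pow_atTop two_ne_zero).const_mul_atTop_of_neg (neg_lt_zero.2 hb))
  have := integral_Ioi_of_hasDerivAt_of_tendsto' (a := 0) (fun x _ => A x)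
    (integrable_mul_exp_neg_mul_sq hb).integrableOn B
  simpa using this

lemma Egauss_integrable : Integrable Egauss := by
  have := integrable_exp_neg_mul_sq (b := (1:ℝ)/2) (by norm_num)
  refine this.congr (Filter.Eventually.of_forall fun x => ?_)
  simp [Egauss]
  ring_nf

lemma key {c : ℝ} (hc : 0 < c) :
    ∫ u : ℝ, Egauss u * (∫ v in (-(c*|u|))..(c*|u|), Egauss v) = 4 * Real.arctan c := by
  -- step 1: reduce to Ioi 0
  have h1 : (∫ u : ℝ, Egauss u * (∫ v in (-(c*|u|))..(c*|u|), Egauss v))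
      = 2 * ∫ x in Set.Ioi (0:ℝ), Egauss x * (∫ v in (-(c*x))..(c*x), Egauss v) := by
    rw [← integral_comp_abs (f := fun x => Egauss x * (∫ v in (-(c*x))..(c*x), Egauss v))]
    congr 1
    ext u
    have : Egauss |u| = Egauss u := by simp [Egauss, sq_abs]
    rw [this]
  rw [h1]
  -- step 2: substitution v = x * t on Ioi 0
  have h2 : ∀ x ∈ Set.Ioi (0:ℝ),
      Egauss x * (∫ v in (-(c*x))..(c*x), Egauss v)
        = ∫ t in Set.Ioc (-c) c, x * Real.exp (-((1+t^2)/2) * x^2) := by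
    intro x hx
    rw [Set.mem_Ioi] at hx
    have hsub : (∫ t in (-c)..c, Egauss (x * t)) = x⁻¹ • ∫ v in (x * -c)..(x * c), Egauss v :=
      intervalIntegral.integral_comp_mul_left Egauss (ne_of_gt hx)
    have he1 : x * -c = -(c*x) := by ring
    have he2 : x * c = c*x := by ring
    rw [he1, he2, smul_eq_mul] at hsub
    have : (∫ v in (-(c*x))..(c*x), Egauss v) = x * ∫ t in (-c)..c, Egauss (x * t) := by
      rw [hsub]; field_simp
    rw [this, ← mul_assoc]
    rw [← intervalIntegral.integral_const_mul (Egauss x * x) (fun t => Egauss (x * t))]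
    rw [intervalIntegral.integral_of_le (by linarith : -c ≤ c)]
    refine setIntegral_congr_fun measurableSet_Ioc fun t _ => ?_
    simp only [Egauss]
    rw [mul_comm (Real.exp (-x^2/2)) x, mul_assoc, ← Real.exp_add]
    congr 1
    ring
  rw [setIntegral_congr_fun measurableSet_Ioi h2]
  -- step 3: Fubini swap
  have hswap :
      (∫ x in Set.Ioi (0:ℝ), ∫ t in Set.Ioc (-c) c, x * Real.exp (-((1+t^2)/2) * x^2))
        = ∫ t in Set.Ioc (-c) c, ∫ x in Set.Ioi (0:ℝ), x * Real.exp (-((1+t^2)/2) * x^2) := by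
    apply integral_integral_swap
    have hD : Integrable (fun p : ℝ × ℝ => |p.1| * Real.exp (-(1/2 : ℝ) * p.1 ^ 2) * 1)
        ((volume.restrict (Set.Ioi (0:ℝ))).prod (volume.restrict (Set.Ioc (-c) c))) := by
      have hf1 : Integrable (fun x : ℝ => |x| * Real.exp (-(1/2 : ℝ) * x ^ 2))
          (volume.restrict (Set.Ioi (0:ℝ))) := by
        refine Integrable.restrict ?_
        have := (integrable_mul_exp_neg_mul_sq (b := (1:ℝ)/2) (by norm_num)).abs
        refine this.congr (Filter.Eventually.of_forall fun x => ?_)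
        dsimp only
        rw [abs_mul, abs_of_pos (Real.exp_pos _)]
      exact hf1.mul_prod (integrable_const 1)
    refine hD.mono' ?_ ?_
    · apply Continuous.aestronglyMeasurable
      fun_prop
    · refine Filter.Eventually.of_forall fun p => ?_
      simp only [Function.uncurry, Real.norm_eq_abs, abs_mul, mul_one]
      rw [abs_of_pos (Real.exp_pos _)]
      have hE : Real.exp (-((1+p.2^2)/2) * p.1^2) ≤ Real.exp (-(1/2:ℝ) * p.1^2) := by
        apply Real.exp_le_exp.mpr
        nlinarith [sq_nonneg p.1, sq_nonneg (p.1*p.2)]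
      exact mul_le_mul_of_nonneg_left hE (abs_nonneg _)
  rw [hswap]
  -- step 4: inner integral
  have h4 : ∀ t ∈ Set.Ioc (-c) c,
      (∫ x in Set.Ioi (0:ℝ), x * Real.exp (-((1+t^2)/2) * x^2)) = (1 + t^2)⁻¹ := by
    intro t _
    have hb : (0:ℝ) < (1+t^2)/2 := by positivity
    rw [aux_ioi hb]
    rw [show (2 * ((1+t^2)/2)) = 1 + t^2 by ring]
  rw [setIntegral_congr_fun measurableSet_Ioc h4]
  rw [← intervalIntegral.integral_of_le (by linarith : -c ≤ c)]
  rw [integral_inv_one_add_sq]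
  rw [Real.arctan_neg]
  ring

noncomputable def phiF (c u : ℝ) : ℝ := ∫ v in (-(c*|u|))..(c*|u|), gaussianPDFReal 0 1 v

theorem stmt_7 {Ω : Type*} [MeasurableSpace Ω] (μ : Measure Ω) [IsProbabilityMeasure μ]
    (U V : Ω → ℝ) (hU : Measurable U) (hV : Measurable V)
    (hUV : IndepFun U V μ)
    (hUlaw : Measure.map U μ = gaussianReal 0 1)
    (hVlaw : Measure.map V μ = gaussianReal 0 1)
    (lS lL : ℝ) (hS : 0 < lS) (hSL : lS ≤ lL) :
    μ {ω | lS * |V ω| ≤ lL * |U ω|} =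
      ENNReal.ofReal (2 / Real.pi * Real.arctan (lL / lS)) ∧
    ENNReal.ofReal (1 / 2) ≤ μ {ω | lS * |V ω| ≤ lL * |U ω|} := by
  have hone : (1:NNReal) ≠ 0 := one_ne_zero
  set c := lL / lS with hcdef
  have hc1 : 1 ≤ c := (one_le_div hS).mpr hSL
  have hc0 : 0 < c := lt_of_lt_of_le one_pos hc1
  have hSmeas : MeasurableSet {p : ℝ × ℝ | lS * |p.2| ≤ lL * |p.1|} := by
    apply measurableSet_le
    · exact measurable_const.mul measurable_snd.abs
    · exact measurable_const.mul measurable_fst.abs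
  have hmap : Measure.map (fun ω => (U ω, V ω)) μ
      = (gaussianReal 0 1).prod (gaussianReal 0 1) := by
    refine ((indepFun_iff_map_prod_eq_prod_map_map hU.aemeasurable hV.aemeasurable).mp
      hUV).trans ?_
    rw [hUlaw, hVlaw]
  have h1 : μ {ω | lS * |V ω| ≤ lL * |U ω|}
      = ((gaussianReal 0 1).prod (gaussianReal 0 1)) {p : ℝ × ℝ | lS * |p.2| ≤ lL * |p.1|} := by
    rw [← hmap, Measure.map_apply (hU.prodMk hV) hSmeas]
    rfl
  have hslice : ∀ u : ℝ, Prod.mk u ⁻¹' {p : ℝ × ℝ | lS * |p.2| ≤ lL * |p.1|}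
      = Set.Icc (-(c*|u|)) (c*|u|) := by
    intro u
    ext v
    simp only [Set.mem_preimage, Set.mem_setOf_eq, Set.mem_Icc, ← abs_le]
    rw [hcdef, div_mul_eq_mul_div, le_div_iff₀ hS, mul_comm]
  have hF : ∀ u : ℝ, (gaussianReal 0 1) (Set.Icc (-(c*|u|)) (c*|u|))
      = ENNReal.ofReal (phiF c u) := by
    intro u
    rw [gaussianReal_apply_eq_integral 0 hone _]
    congr 1
    simp only [phiF]
    rw [intervalIntegral.integral_of_le (neg_le_self (by positivity)),
      integral_Icc_eq_integral_Ioc]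
  have h2 : ((gaussianReal 0 1).prod (gaussianReal 0 1)) {p : ℝ × ℝ | lS * |p.2| ≤ lL * |p.1|}
      = ∫⁻ u, ENNReal.ofReal (phiF c u) ∂(gaussianReal 0 1) := by
    rw [Measure.prod_apply hSmeas]
    congr 1
    ext u
    rw [hslice u, hF u]
  -- properties of phiF c
  have hint : ∀ a b : ℝ, IntervalIntegrable (gaussianPDFReal 0 1) volume a b :=
    fun a b => (integrable_gaussianPDFReal 0 1).intervalIntegrable
  have hG : Continuous (fun y : ℝ => ∫ x in (0:ℝ)..y, gaussianPDFReal 0 1 x) :=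
    (integrable_gaussianPDFReal 0 1).continuous_primitive 0
  have hφeq : phiF c = fun u => (∫ x in (0:ℝ)..(c*|u|), gaussianPDFReal 0 1 x)
      - ∫ x in (0:ℝ)..(-(c*|u|)), gaussianPDFReal 0 1 x := by
    funext u
    simp only [phiF]
    exact (intervalIntegral.integral_interval_sub_left (hint 0 (c*|u|)) (hint 0 (-(c*|u|)))).symm
  have hφcont : Continuous (phiF c) := by
    rw [hφeq]
    exact (hG.comp (by fun_prop)).sub (hG.comp (by fun_prop))
  have hφnn : ∀ u, 0 ≤ phiF c u := fun u =>
    intervalIntegral.integral_nonneg (neg_le_self (by positivity))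
      (fun v _ => gaussianPDFReal_nonneg 0 1 v)
  have hφle : ∀ u, phiF c u ≤ 1 := by
    intro u
    simp only [phiF]
    rw [intervalIntegral.integral_of_le (neg_le_self (by positivity))]
    calc ∫ v in Set.Ioc (-(c*|u|)) (c*|u|), gaussianPDFReal 0 1 v
        ≤ ∫ v, gaussianPDFReal 0 1 v :=
          setIntegral_le_integral (integrable_gaussianPDFReal 0 1)
            (Filter.Eventually.of_forall (gaussianPDFReal_nonneg 0 1))
      _ = 1 := integral_gaussianPDFReal_eq_one 0 hone
  have hInt : Integrable (fun u => gaussianPDFReal 0 1 u * phiF c u) volume := by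
    have := (integrable_gaussianPDFReal 0 1).bdd_mul hφcont.aestronglyMeasurable
      (Filter.Eventually.of_forall fun u => by rw [Real.norm_eq_abs, abs_of_nonneg (hφnn u)]; exact hφle u)
    exact this.congr (Filter.Eventually.of_forall fun u => mul_comm _ _)
  have h3 : ∫⁻ u, ENNReal.ofReal (phiF c u) ∂(gaussianReal 0 1)
      = ENNReal.ofReal (∫ u, gaussianPDFReal 0 1 u * phiF c u) := by
    rw [gaussianReal_of_var_ne_zero 0 hone,
      lintegral_withDensity_eq_lintegral_mul volume (measurable_gaussianPDF 0 1)
        (Measurable.ennreal_ofReal hφcont.measurable)]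
    rw [ofReal_integral_eq_lintegral_ofReal hInt
      (Filter.Eventually.of_forall fun u => mul_nonneg (gaussianPDFReal_nonneg 0 1 u) (hφnn u))]
    congr 1
    ext u
    simp only [Pi.mul_apply, gaussianPDF]
    rw [ENNReal.ofReal_mul (gaussianPDFReal_nonneg 0 1 u)]
  -- value of the real integral
  have h2π : Real.sqrt (2*π) * Real.sqrt (2*π) = 2*π := Real.mul_self_sqrt (by positivity)
  have hpdf : gaussianPDFReal 0 1 = fun x => (Real.sqrt (2*π))⁻¹ * Egauss x := by
    funext x
    simp [gaussianPDFReal, Egauss]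
  have hval : ∫ u, gaussianPDFReal 0 1 u * phiF c u = 2 / π * Real.arctan c := by
    have hpt : ∀ u, gaussianPDFReal 0 1 u * phiF c u
        = (2*π)⁻¹ * (Egauss u * ∫ v in (-(c*|u|))..(c*|u|), Egauss v) := by
      intro u
      simp only [phiF]
      rw [hpdf]
      dsimp only
      rw [intervalIntegral.integral_const_mul]
      rw [← h2π]
      field_simp
      rw [Real.sqrt_sq (Real.sqrt_nonneg _)]
    calc ∫ u, gaussianPDFReal 0 1 u * phiF c u
        = ∫ u, (2*π)⁻¹ * (Egauss u * ∫ v in (-(c*|u|))..(c*|u|), Egauss v) := by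
          congr 1; funext u; exact hpt u
      _ = (2*π)⁻¹ * ∫ u, Egauss u * ∫ v in (-(c*|u|))..(c*|u|), Egauss v :=
          integral_const_mul _ _
      _ = (2*π)⁻¹ * (4 * Real.arctan c) := by rw [key hc0]
      _ = 2 / π * Real.arctan c := by
          have hπ : π ≠ 0 := ne_of_gt Real.pi_pos
          field_simp
          ring
  have hP : μ {ω | lS * |V ω| ≤ lL * |U ω|} = ENNReal.ofReal (2 / π * Real.arctan c) := by
    rw [h1, h2, h3, hval]
  refine ⟨hP, ?_⟩
  rw [hP]
  apply ENNReal.ofReal_le_ofReal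
  have ha : π/4 ≤ Real.arctan c := by
    calc π/4 = Real.arctan 1 := Real.arctan_one.symm
      _ ≤ Real.arctan c := Real.arctan_strictMono.monotone hc1
  have hπ : 0 < π := Real.pi_pos
  rw [div_mul_eq_mul_div, le_div_iff₀ hπ]
  nlinarith
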